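/- arXiv:1507.08390 — 2 statements merged into one kernel-verified Lean document; each statement's English description precedes it below -/
import Mathlib

section
/- Let a ≥ 0, c > 1, and ε > 0. There exists C = C(a, c, ε) such that for all x₁ > 0 and ρ₂ > 0, ∫_{x₁}^∞ (ζ/(ζ+ρ₂))^{-a} · (ρ₂/ζ)^c · exp(-ζ²/ρ₂²) · dζ/ρ₂ ≤ C·( (x₁/ρ₂)^{(1-c-ε)₋} + (x₁/ρ₂)^{(1-a-c-ε)₋} ), where for a real number b, b₋ = min{b, 0}. -/
open MeasureTheory

lemma J_integrable {p : ℝ} (hp : 0 < p) {u : ℝ} (hu : 0 < u) :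
    IntegrableOn (fun t => t ^ (-p) * Real.exp (-t ^ 2)) (Set.Ioi u) := by
  have hg : IntegrableOn (fun t : ℝ => u ^ (-p) * Real.exp (-t ^ 2)) (Set.Ioi u) := by
    have : Integrable (fun t : ℝ => Real.exp (-1 * t ^ 2)) := integrable_exp_neg_mul_sq one_pos
    simpa using (this.const_mul (u ^ (-p))).integrableOn
  refine hg.mono' ?_ ?_
  · apply Measurable.aestronglyMeasurable
    fun_prop
  · filter_upwards [ae_restrict_mem measurableSet_Ioi] with t ht
    have ht0 : 0 < t := hu.trans ht
    have h1 : t ^ (-p) ≤ u ^ (-p) :=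
      Real.rpow_le_rpow_of_nonpos hu (le_of_lt ht) (by linarith)
    rw [Real.norm_eq_abs, abs_of_nonneg (by positivity)]
    exact mul_le_mul_of_nonneg_right h1 (Real.exp_nonneg _)

lemma J_bound {p ε : ℝ} (hp : 1 < p) (hε : 0 < ε) :
    ∃ C > 0, ∀ u : ℝ, 0 < u →
      (∫ t in Set.Ioi u, t ^ (-p) * Real.exp (-t ^ 2)) ≤ C * u ^ (1 - p - ε) := by
  obtain ⟨n, hn⟩ : ∃ n : ℕ, ε ≤ 2 * n := by
    obtain ⟨n, hn⟩ := exists_nat_ge ε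
    exact ⟨n, by linarith [hn]⟩
  have hp1 : (0:ℝ) < p - 1 := by linarith
  have hC : (0:ℝ) < 2 / (p - 1) + n.factorial := by
    have h1 : (0:ℝ) < 2 / (p - 1) := by positivity
    have h2 : (0:ℝ) ≤ (n.factorial : ℝ) := Nat.cast_nonneg _
    linarith
  refine ⟨2 / (p - 1) + n.factorial, hC, fun u hu => ?_⟩
  have hup : 0 < u ^ (1 - p - ε) := Real.rpow_pos_of_pos hu _
  rcases le_or_gt u 1 with hu1 | hu1
  · -- small u case
    have hsplit : Set.Ioi u = Set.Ioc u 1 ∪ Set.Ioi 1 := (Set.Ioc_union_Ioi_eq_Ioi hu1).symm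
    have hint := J_integrable (lt_trans one_pos hp) hu
    have hi1 : IntegrableOn (fun t => t ^ (-p) * Real.exp (-t ^ 2)) (Set.Ioc u 1) :=
      hint.mono_set (by rw [hsplit]; exact Set.subset_union_left)
    have hi2 : IntegrableOn (fun t => t ^ (-p) * Real.exp (-t ^ 2)) (Set.Ioi 1) :=
      hint.mono_set (by rw [hsplit]; exact Set.subset_union_right)
    have hirpow1 : IntegrableOn (fun t : ℝ => t ^ (-p)) (Set.Ioc u 1) := by
      apply (ContinuousOn.integrableOn_Icc ?_).mono_set Set.Ioc_subset_Icc_self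
      exact ContinuousOn.rpow_const continuousOn_id
        (fun x hx => Or.inl (ne_of_gt (lt_of_lt_of_le hu hx.1)))
    have hirpow2 : IntegrableOn (fun t : ℝ => t ^ (-p)) (Set.Ioi 1) :=
      integrableOn_Ioi_rpow_of_lt (by linarith) one_pos
    have heq : (∫ t in Set.Ioi u, t ^ (-p) * Real.exp (-t ^ 2))
        = (∫ t in Set.Ioc u 1, t ^ (-p) * Real.exp (-t ^ 2))
          + ∫ t in Set.Ioi 1, t ^ (-p) * Real.exp (-t ^ 2) := by
      rw [hsplit]
      exact setIntegral_union (by simp [Set.disjoint_left]) measurableSet_Ioi hi1 hi2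
    have hpt : ∀ t : ℝ, 0 < t → t ^ (-p) * Real.exp (-t ^ 2) ≤ t ^ (-p) := by
      intro t ht0
      nth_rewrite 2 [← mul_one (t ^ (-p))]
      refine mul_le_mul_of_nonneg_left (Real.exp_le_one_iff.2 ?_) (by positivity)
      simpa using sq_nonneg t
    have hb1 : (∫ t in Set.Ioc u 1, t ^ (-p) * Real.exp (-t ^ 2))
        ≤ ∫ t in Set.Ioc u 1, t ^ (-p) :=
      setIntegral_mono_on hi1 hirpow1 measurableSet_Ioc
        (fun t ht => hpt t (hu.trans ht.1))
    have hb2 : (∫ t in Set.Ioi 1, t ^ (-p) * Real.exp (-t ^ 2))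
        ≤ ∫ t in Set.Ioi 1, t ^ (-p) :=
      setIntegral_mono_on hi2 hirpow2 measurableSet_Ioi
        (fun t ht => hpt t (one_pos.trans ht))
    have hv1 : (∫ t in Set.Ioc u 1, t ^ (-p)) = ((1:ℝ) ^ (-p + 1) - u ^ (-p + 1)) / (-p + 1) := by
      rw [← intervalIntegral.integral_of_le hu1]
      exact integral_rpow (Or.inr ⟨fun h => hp.ne' (by linarith),
        by rw [Set.uIcc_of_le hu1]; intro h; exact absurd h.1 (not_le.2 hu)⟩)
    have hv2 : (∫ t in Set.Ioi 1, t ^ (-p)) = -(1:ℝ) ^ (-p + 1) / (-p + 1) :=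
      integral_Ioi_rpow_of_lt (by linarith) one_pos
    have h1p : (1:ℝ) ^ (-p + 1) = 1 := Real.one_rpow _
    have hu1p : (1:ℝ) ≤ u ^ (-p + 1) :=
      Real.one_le_rpow_of_pos_of_le_one_of_nonpos hu hu1 (by linarith)
    have hmono : u ^ (-p + 1) ≤ u ^ (1 - p - ε) :=
      Real.rpow_le_rpow_of_exponent_ge hu hu1 (by linarith)
    have : (∫ t in Set.Ioi u, t ^ (-p) * Real.exp (-t ^ 2))
        ≤ 2 / (p - 1) * u ^ (1 - p - ε) := by
      rw [heq]
      have hne : (-p + 1) ≠ 0 := by intro h; exact hp.ne' (by linarith)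
      have hne2 : (p - 1) ≠ 0 := ne_of_gt hp1
      have e1 : ((1:ℝ) ^ (-p + 1) - u ^ (-p + 1)) / (-p + 1) = (u ^ (-p + 1) - 1) / (p - 1) := by
        rw [h1p, div_eq_div_iff hne hne2]; ring
      have e2 : -(1:ℝ) ^ (-p + 1) / (-p + 1) = 1 / (p - 1) := by
        rw [h1p, div_eq_div_iff hne hne2]; ring
      have := add_le_add hb1 hb2
      rw [hv1, hv2, e1, e2] at this
      refine this.trans ?_
      rw [← add_div, div_mul_eq_mul_div, div_le_div_iff₀ hp1 hp1]
      have : u ^ (-p + 1) - 1 + 1 ≤ 2 * u ^ (1 - p - ε) := by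
        have : u ^ (-p + 1) ≤ u ^ (1 - p - ε) := hmono
        linarith [hu1p.trans hmono]
      nlinarith [this, hp1]
    refine this.trans ?_
    have : (2 / (p - 1)) ≤ 2 / (p - 1) + n.factorial := by
      have : (0:ℝ) ≤ (n.factorial : ℝ) := Nat.cast_nonneg _
      linarith
    exact mul_le_mul_of_nonneg_right this hup.le
  · -- large u case
    have hint := J_integrable (lt_trans one_pos hp) hu
    have hexpint : IntegrableOn (fun t : ℝ => u ^ (-p) * Real.exp (-u * t)) (Set.Ioi u) :=
      ((exp_neg_integrableOn_Ioi u hu).const_mul _)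
    have hb : (∫ t in Set.Ioi u, t ^ (-p) * Real.exp (-t ^ 2))
        ≤ ∫ t in Set.Ioi u, u ^ (-p) * Real.exp (-u * t) := by
      refine setIntegral_mono_on hint hexpint measurableSet_Ioi (fun t ht => ?_)
      have ht0 : 0 < t := hu.trans ht
      have h1 : t ^ (-p) ≤ u ^ (-p) :=
        Real.rpow_le_rpow_of_nonpos hu ht.le (by linarith)
      have h2 : Real.exp (-t ^ 2) ≤ Real.exp (-u * t) := by
        apply Real.exp_le_exp.2
        nlinarith [(show u < t from ht).le]
      exact mul_le_mul h1 h2 (Real.exp_nonneg _) (by positivity)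
    have hval : (∫ t in Set.Ioi u, Real.exp (-u * t)) = u⁻¹ * Real.exp (-(u * u)) := by
      have := integral_comp_mul_left_Ioi (fun x : ℝ => Real.exp (-x)) u hu
      simp only [smul_eq_mul] at this
      rw [show (fun t : ℝ => Real.exp (-u * t)) = fun t : ℝ => Real.exp (-(u * t)) by
        funext t; ring_nf]
      rw [this, integral_exp_neg_Ioi]
    have hexp : Real.exp (-(u * u)) ≤ n.factorial * u ^ (-(2 * (n:ℝ))) := by
      have h2 : ((u^2)^n / n.factorial : ℝ) ≤ Real.exp (u^2) :=
        Real.pow_div_factorial_le_exp (x := u^2) (by positivity) n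
      have hpow : u ^ (-(2 * (n:ℝ))) = ((u^2)^n)⁻¹ := by
        rw [← pow_mul, ← Real.rpow_natCast u (2*n), ← Real.rpow_neg hu.le]
        push_cast; ring_nf
      rw [hpow, show -(u*u) = -(u^2) by ring, Real.exp_neg]
      calc (Real.exp (u^2))⁻¹ ≤ ((u^2)^n / n.factorial)⁻¹ :=
            inv_anti₀ (by positivity) h2
        _ = n.factorial * ((u^2)^n)⁻¹ := by
            rw [inv_div, div_eq_mul_inv]
    have hfinal : u ^ (-p) * (u⁻¹ * Real.exp (-(u * u)))
        ≤ n.factorial * u ^ (1 - p - ε) := by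
      have step : u ^ (-p) * (u⁻¹ * Real.exp (-(u * u)))
          ≤ u ^ (-p) * (u⁻¹ * (n.factorial * u ^ (-(2 * (n:ℝ))))) := by
        refine mul_le_mul_of_nonneg_left (mul_le_mul_of_nonneg_left hexp ?_) ?_ <;> positivity
      refine step.trans ?_
      have hrw : u ^ (-p) * (u⁻¹ * (n.factorial * u ^ (-(2 * (n:ℝ)))))
          = n.factorial * u ^ (-p + -1 + -(2 * (n:ℝ))) := by
        rw [Real.rpow_add hu, Real.rpow_add hu, Real.rpow_neg_one]
        ring
      rw [hrw]
      refine mul_le_mul_of_nonneg_left ?_ (Nat.cast_nonneg _)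
      exact Real.rpow_le_rpow_of_exponent_le hu1.le (by push_cast; linarith)
    have : (∫ t in Set.Ioi u, u ^ (-p) * Real.exp (-u * t))
        = u ^ (-p) * (u⁻¹ * Real.exp (-(u * u))) := by
      rw [integral_const_mul, hval]
    rw [this] at hb
    refine hb.trans (hfinal.trans ?_)
    refine mul_le_mul_of_nonneg_right ?_ hup.le
    have : (0:ℝ) < 2 / (p - 1) := by positivity
    linarith

theorem stmt_12 (a c ε : ℝ) (ha : 0 ≤ a) (hc : 1 < c) (hε : 0 < ε) :
    ∃ C > 0, ∀ (x₁ ρ₂ : ℝ), 0 < x₁ → 0 < ρ₂ →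
      (∫ ζ in Set.Ioi x₁,
          (ζ / (ζ + ρ₂)) ^ (-a) * (ρ₂ / ζ) ^ c * Real.exp (-ζ ^ 2 / ρ₂ ^ 2) / ρ₂) ≤
        C * ((x₁ / ρ₂) ^ min (1 - c - ε) 0 + (x₁ / ρ₂) ^ min (1 - a - c - ε) 0) := by
  have hac : 1 < a + c := by linarith
  obtain ⟨C₁, hC₁pos, hC₁⟩ := J_bound hc hε
  obtain ⟨C₂, hC₂pos, hC₂⟩ := J_bound hac hε
  have h2a : (0:ℝ) < 2 ^ a := Real.rpow_pos_of_pos two_pos a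
  refine ⟨2 ^ a * (C₁ + C₂), by positivity, fun x₁ ρ hx hρ => ?_⟩
  set u : ℝ := ρ⁻¹ * x₁ with hudef
  have hu0 : 0 < u := by positivity
  have hud : x₁ / ρ = u := by rw [hudef, div_eq_inv_mul]
  set H : ℝ → ℝ := fun t => 2 ^ a *
    (t ^ (-c) * Real.exp (-t ^ 2) + t ^ (-(a + c)) * Real.exp (-t ^ 2)) with hH
  have hHint : IntegrableOn H (Set.Ioi u) :=
    ((J_integrable (by linarith) hu0).add
      (J_integrable (by linarith : (0:ℝ) < a + c) hu0)).const_mul _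
  have hcomp : IntegrableOn (fun ζ => ρ⁻¹ * H (ρ⁻¹ * ζ)) (Set.Ioi x₁) := by
    refine Integrable.const_mul ?_ _
    exact (integrableOn_Ioi_comp_mul_left_iff H x₁ (inv_pos.2 hρ)).2 hHint
  have hmono : (∫ ζ in Set.Ioi x₁,
      (ζ / (ζ + ρ)) ^ (-a) * (ρ / ζ) ^ c * Real.exp (-ζ ^ 2 / ρ ^ 2) / ρ)
      ≤ ∫ ζ in Set.Ioi x₁, ρ⁻¹ * H (ρ⁻¹ * ζ) := by
    refine integral_mono_of_nonneg ?_ hcomp ?_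
    · filter_upwards [ae_restrict_mem measurableSet_Ioi] with ζ hζ
      have hζ0 : 0 < ζ := hx.trans hζ
      have h1 : (0:ℝ) ≤ ζ / (ζ + ρ) := div_nonneg hζ0.le (by linarith)
      have h2 : (0:ℝ) ≤ ρ / ζ := div_nonneg hρ.le hζ0.le
      exact div_nonneg (mul_nonneg (mul_nonneg (Real.rpow_nonneg h1 _)
        (Real.rpow_nonneg h2 _)) (Real.exp_nonneg _)) hρ.le
    · filter_upwards [ae_restrict_mem measurableSet_Ioi] with ζ hζ
      have hζ0 : 0 < ζ := hx.trans hζ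
      set s : ℝ := ρ / ζ with hs
      have hs0 : 0 < s := div_pos hρ hζ0
      have ht : ρ⁻¹ * ζ = s⁻¹ := by rw [hs, inv_div, div_eq_inv_mul]
      have hEeq : -ζ ^ 2 / ρ ^ 2 = -(s⁻¹) ^ 2 := by rw [hs, inv_div]; ring
      have h3 : (s⁻¹ : ℝ) ^ (-c) = s ^ c := by
        rw [Real.inv_rpow hs0.le, Real.rpow_neg hs0.le, inv_inv]
      have h4 : (s⁻¹ : ℝ) ^ (-(a + c)) = s ^ (a + c) := by
        rw [Real.inv_rpow hs0.le, Real.rpow_neg hs0.le, inv_inv]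
      have hA : (ζ / (ζ + ρ)) ^ (-a) = (1 + s) ^ a := by
        have h1 : ζ / (ζ + ρ) = (1 + s)⁻¹ := by
          rw [hs]
          rw [show (1 : ℝ) + ρ / ζ = (ζ + ρ) / ζ by field_simp]
          rw [inv_div]
        rw [h1, Real.inv_rpow (by positivity), Real.rpow_neg (by positivity), inv_inv]
      simp only [hH]
      rw [ht, hEeq, h3, h4, hA]
      set E : ℝ := Real.exp (-(s⁻¹) ^ 2) with hE
      have hsum : s ^ (a + c) = s ^ a * s ^ c := Real.rpow_add hs0 a c
      have key : (1 + s) ^ a ≤ 2 ^ a * (1 + s ^ a) := by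
        rcases le_or_gt s 1 with h | h
        · have k1 : (1 + s) ^ a ≤ 2 ^ a := Real.rpow_le_rpow (by linarith) (by linarith) ha
          nlinarith [Real.rpow_nonneg hs0.le a]
        · have k1 : (1 + s) ^ a ≤ (2 * s) ^ a :=
            Real.rpow_le_rpow (by linarith) (by linarith) ha
          rw [Real.mul_rpow (by norm_num) hs0.le] at k1
          nlinarith [Real.rpow_pos_of_pos hs0 a]
      have hXpos : (0:ℝ) ≤ s ^ c * E :=
        mul_nonneg (Real.rpow_nonneg hs0.le c) (Real.exp_nonneg _)
      calc (1 + s) ^ a * s ^ c * E / ρ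
          = (1 + s) ^ a * (s ^ c * E) * ρ⁻¹ := by ring
        _ ≤ 2 ^ a * (1 + s ^ a) * (s ^ c * E) * ρ⁻¹ := by
            refine mul_le_mul_of_nonneg_right
              (mul_le_mul_of_nonneg_right key hXpos) (inv_nonneg.2 hρ.le)
        _ = ρ⁻¹ * (2 ^ a * (s ^ c * E + s ^ (a + c) * E)) := by rw [hsum]; ring
  have hchg : (∫ ζ in Set.Ioi x₁, ρ⁻¹ * H (ρ⁻¹ * ζ)) = ∫ t in Set.Ioi u, H t := by
    rw [integral_const_mul, integral_comp_mul_left_Ioi H x₁ (inv_pos.2 hρ), smul_eq_mul,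
      inv_inv, ← mul_assoc, inv_mul_cancel₀ hρ.ne', one_mul]
  have hsplit : (∫ t in Set.Ioi u, H t)
      = 2 ^ a * ((∫ t in Set.Ioi u, t ^ (-c) * Real.exp (-t ^ 2))
        + ∫ t in Set.Ioi u, t ^ (-(a + c)) * Real.exp (-t ^ 2)) := by
    simp only [hH]
    rw [integral_const_mul, integral_add (J_integrable (by linarith) hu0)
      (J_integrable (by linarith : (0:ℝ) < a + c) hu0)]
  have hX : (0:ℝ) < u ^ (1 - c - ε) := Real.rpow_pos_of_pos hu0 _
  have hY : (0:ℝ) < u ^ (1 - a - c - ε) := Real.rpow_pos_of_pos hu0 _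
  have hbound : (∫ t in Set.Ioi u, H t)
      ≤ 2 ^ a * (C₁ * u ^ (1 - c - ε) + C₂ * u ^ (1 - a - c - ε)) := by
    rw [hsplit]
    have b1 := hC₁ u hu0
    have b2 := hC₂ u hu0
    rw [show (1 : ℝ) - (a + c) - ε = 1 - a - c - ε by ring] at b2
    exact mul_le_mul_of_nonneg_left (add_le_add b1 b2) h2a.le
  have hmin1 : min (1 - c - ε) 0 = 1 - c - ε := min_eq_left (by linarith)
  have hmin2 : min (1 - a - c - ε) 0 = 1 - a - c - ε := min_eq_left (by linarith)
  rw [hmin1, hmin2, hud]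
  refine (hmono.trans (le_of_eq hchg)).trans (hbound.trans ?_)
  nlinarith [hX, hY, hC₁pos, hC₂pos, h2a,
    mul_pos hC₁pos hY, mul_pos hC₂pos hX, mul_pos (mul_pos hC₁pos hY) h2a]
end

section
/- Let σ > 0 and r = min{|μ|, 1} for μ ≠ 0. There exist constants C, depending on μ, σ, n, such that for all x, y ∈ ℝⁿ (with x', y' denoting the first m coordinates, both nonzero) and t > s: |(|x'|^μ/|y'|^μ − 1)| · (t−s)^{−(n+2)/2} · exp(−σ|x−y|²/(t−s)) ≤ C · |x'|^{−r} · Φ(|x'|/|y'|) · (t−s)^{−(n+2−r)/2} · exp(−σ|x−y|²/(2(t−s))), where Φ(t) = t^μ + t if μ > 1, t^μ if 0 < μ ≤ 1, 1 if −1 ≤ μ < 0, and t^{μ+1} + 1 if μ < −1. -/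
/-- The function Φ from the paper, defined piecewise according to μ. -/
noncomputable def Phi (μ t : ℝ) : ℝ :=
  if 1 < μ then t ^ μ + t
  else if 0 < μ then t ^ μ
  else if -1 ≤ μ then 1
  else t ^ (μ + 1) + 1

-- subadditivity of rpow for exponent in [0,1], real version
lemma my_rpow_add_le {p x y : ℝ} (hx : 0 ≤ x) (hy : 0 ≤ y) (hp : 0 ≤ p) (hp1 : p ≤ 1) :
    (x + y) ^ p ≤ x ^ p + y ^ p := by
  have h := NNReal.rpow_add_le_add_rpow x.toNNReal y.toNNReal hp hp1
  rw [← Real.toNNReal_add hx hy] at h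
  have h2 := NNReal.coe_le_coe.2 h
  simpa [NNReal.coe_rpow, Real.coe_toNNReal, hx, hy, add_nonneg hx hy] using h2

lemma my_aux1 {α t : ℝ} (hα0 : 0 < α) (hα1 : α ≤ 1) (ht : 0 < t) :
    |t ^ α - 1| ≤ |t - 1| ^ α := by
  rcases le_or_gt 1 t with h | h
  · have h1 : t ^ α ≤ (t - 1) ^ α + 1 ^ α := by
      have := my_rpow_add_le (x := t - 1) (y := 1) (by linarith) zero_le_one hα0.le hα1
      simpa using this
    rw [Real.one_rpow] at h1
    have h2 : (1:ℝ) ≤ t ^ α := Real.one_le_rpow h (by linarith)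
    rw [abs_of_nonneg (by linarith), abs_of_nonneg (by linarith)]
    linarith
  · have h1 : (1:ℝ) ≤ (1 - t) ^ α + t ^ α := by
      have := my_rpow_add_le (x := 1 - t) (y := t) (by linarith) ht.le hα0.le hα1
      simpa using this
    have h2 : t ^ α ≤ 1 := Real.rpow_le_one ht.le h.le hα0.le
    rw [abs_of_nonpos (by linarith), abs_of_nonpos (by linarith)]
    have : -(t-1) = 1 - t := by ring
    rw [this]; linarith

lemma my_aux2 {α t : ℝ} (hα : 1 ≤ α) (ht : 0 < t) :
    |t ^ α - 1| ≤ α * (t ^ (α - 1) + 1) * |t - 1| := by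
  have htpos : (0:ℝ) < t ^ (α - 1) := Real.rpow_pos_of_pos ht _
  rcases le_or_gt 1 t with h | h
  · have hs : (-1:ℝ) ≤ 1/t - 1 := by
      have : 0 < 1/t := by positivity
      linarith
    have hb := one_add_mul_self_le_rpow_one_add hs hα
    have hrw : (1 + (1/t - 1)) = 1/t := by ring
    rw [hrw] at hb
    have h1t : (1/t) ^ α = (t ^ α)⁻¹ := by
      rw [one_div, Real.inv_rpow ht.le]
    rw [h1t] at hb
    have hta : (0:ℝ) < t ^ α := Real.rpow_pos_of_pos ht _
    have key : t ^ α - 1 ≤ α * t ^ (α - 1) * (t - 1) := by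
      have hmul := mul_le_mul_of_nonneg_right hb hta.le
      rw [inv_mul_cancel₀ hta.ne'] at hmul
      have e1 : t ^ (α - 1) = t ^ α / t := by
        rw [Real.rpow_sub ht, Real.rpow_one]
      have e2 : (1 + α * (1/t - 1)) * t ^ α
          = t ^ α + α * (t ^ α / t - t ^ α) := by
        field_simp
      rw [e2] at hmul
      rw [e1]
      have : t ^ α / t * (t - 1) = t ^ α - t ^ α / t := by
        field_simp
      nlinarith [this]
    have h2 : (1:ℝ) ≤ t ^ α := Real.one_le_rpow h (by linarith)
    rw [abs_of_nonneg (by linarith), abs_of_nonneg (by linarith)]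
    nlinarith
  · have hs : (-1:ℝ) ≤ t - 1 := by linarith
    have hb := one_add_mul_self_le_rpow_one_add hs hα
    have hrw : (1 + (t - 1)) = t := by ring
    rw [hrw] at hb
    have h2 : t ^ α ≤ 1 := Real.rpow_le_one ht.le h.le (by linarith)
    rw [abs_of_nonpos (by linarith), abs_of_nonpos (by linarith)]
    nlinarith

lemma Phi_pos {μ t : ℝ} (ht : 0 < t) : 0 < Phi μ t := by
  unfold Phi
  split_ifs with h1 h2 h3
  · positivity
  · positivity
  · positivity
  · positivity

lemma key_ineq (μ : ℝ) (hμ : μ ≠ 0) {t : ℝ} (ht : 0 < t) :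
    |t ^ μ - 1| ≤ max |μ| 1 * (t ^ (-(min |μ| 1)) * Phi μ t * |t - 1| ^ (min |μ| 1)) := by
  have hK1 : (1:ℝ) ≤ max |μ| 1 := le_max_right _ _
  unfold Phi
  rcases lt_or_ge 1 μ with h1 | h1
  · rw [if_pos h1]
    have hr : min |μ| 1 = 1 := min_eq_right (by rw [abs_of_pos (by linarith)]; linarith)
    have hKμ : μ ≤ max |μ| 1 := le_trans (le_abs_self μ) (le_max_left _ _)
    rw [hr]
    have h := my_aux2 (le_of_lt h1) ht
    have e1 : t ^ (-(1:ℝ)) * (t ^ μ + t) = t ^ (μ - 1) + 1 := by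
      rw [Real.rpow_neg_one, Real.rpow_sub ht, Real.rpow_one]
      field_simp
    rw [Real.rpow_one, e1]
    calc |t ^ μ - 1| ≤ μ * (t ^ (μ - 1) + 1) * |t - 1| := h
      _ ≤ max |μ| 1 * ((t ^ (μ - 1) + 1) * |t - 1|) := by
          rw [mul_assoc]
          apply mul_le_mul_of_nonneg_right hKμ
          positivity
  · rcases lt_or_ge 0 μ with h2 | h2
    · rw [if_neg (not_lt.2 h1), if_pos h2]
      have hr : min |μ| 1 = μ := by rw [abs_of_pos h2]; exact min_eq_left h1
      rw [hr]
      have e1 : t ^ (-μ) * t ^ μ = 1 := by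
        rw [← Real.rpow_add ht]; simp
      rw [e1, one_mul]
      calc |t ^ μ - 1| ≤ |t - 1| ^ μ := my_aux1 h2 h1 ht
        _ ≤ max |μ| 1 * |t - 1| ^ μ := le_mul_of_one_le_left (by positivity) hK1
    · rcases le_or_gt (-1) μ with h3 | h3
      · have hμneg : μ < 0 := lt_of_le_of_ne h2 hμ
        rw [if_neg (not_lt.2 h1), if_neg (not_lt.2 h2), if_pos h3]
        have hr : min |μ| 1 = -μ := by rw [abs_of_neg hμneg]; exact min_eq_left (by linarith)
        rw [hr, neg_neg, mul_one]
        have hν0 : 0 < -μ := by linarith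
        have hν1 : -μ ≤ 1 := by linarith
        have e1 : t ^ μ - 1 = t ^ μ * (1 - t ^ (-μ)) := by
          rw [mul_sub, mul_one, ← Real.rpow_add ht]; simp
        have habs : |t ^ μ - 1| = t ^ μ * |t ^ (-μ) - 1| := by
          rw [e1, abs_mul, abs_of_pos (Real.rpow_pos_of_pos ht μ), abs_sub_comm]
        rw [habs]
        have h := my_aux1 hν0 hν1 ht
        calc t ^ μ * |t ^ (-μ) - 1| ≤ t ^ μ * |t - 1| ^ (-μ) :=
              mul_le_mul_of_nonneg_left h (Real.rpow_pos_of_pos ht μ).le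
          _ ≤ max |μ| 1 * (t ^ μ * |t - 1| ^ (-μ)) := le_mul_of_one_le_left (by positivity) hK1
      · rw [if_neg (not_lt.2 h1), if_neg (not_lt.2 h2), if_neg (not_le.2 h3)]
        have hr : min |μ| 1 = 1 := min_eq_right (by rw [abs_of_neg (by linarith)]; linarith)
        rw [hr, Real.rpow_one]
        have hν : 1 ≤ -μ := by linarith
        have e1 : t ^ μ - 1 = t ^ μ * (1 - t ^ (-μ)) := by
          rw [mul_sub, mul_one, ← Real.rpow_add ht]; simp
        have habs : |t ^ μ - 1| = t ^ μ * |t ^ (-μ) - 1| := by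
          rw [e1, abs_mul, abs_of_pos (Real.rpow_pos_of_pos ht μ), abs_sub_comm]
        have h := my_aux2 hν ht
        have hKν : -μ ≤ max |μ| 1 := le_trans (neg_le_abs μ) (le_max_left _ _)
        have hμμ : t ^ μ * t ^ (-μ) = 1 := by rw [← Real.rpow_add ht]; simp
        have e2 : t ^ μ * (t ^ (-μ - 1) + 1) = t ^ (-(1:ℝ)) * (t ^ (μ + 1) + 1) := by
          rw [Real.rpow_neg_one, Real.rpow_sub ht, Real.rpow_one, Real.rpow_add ht,
            Real.rpow_one]
          field_simp
          linear_combination hμμ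
        rw [habs]
        calc t ^ μ * |t ^ (-μ) - 1| ≤ t ^ μ * (-μ * (t ^ (-μ - 1) + 1) * |t - 1|) :=
              mul_le_mul_of_nonneg_left h (Real.rpow_pos_of_pos ht μ).le
          _ = -μ * (t ^ μ * (t ^ (-μ - 1) + 1) * |t - 1|) := by ring
          _ = -μ * (t ^ (-(1:ℝ)) * (t ^ (μ + 1) + 1) * |t - 1|) := by rw [e2]
          _ ≤ max |μ| 1 * (t ^ (-(1:ℝ)) * (t ^ (μ + 1) + 1) * |t - 1|) := by
              apply mul_le_mul_of_nonneg_right hKν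
              have := Real.rpow_pos_of_pos ht (μ+1)
              have := Real.rpow_pos_of_pos ht (-(1:ℝ))
              positivity

lemma my_exp_bound {σ : ℝ} (hσ : 0 < σ) {r v : ℝ} (hr0 : 0 ≤ r) (hr1 : r ≤ 1) (hv : 0 ≤ v) :
    v ^ (r/2) * Real.exp (-(σ * v / 2)) ≤ 1 + 2/σ := by
  have hE : (0:ℝ) < Real.exp (σ * v / 2) := Real.exp_pos _
  have hEneg : Real.exp (-(σ * v / 2)) = (Real.exp (σ * v / 2))⁻¹ := Real.exp_neg _
  have h1 : v ^ (r/2) ≤ 1 + v := by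
    rcases le_or_gt v 1 with h | h
    · have : v ^ (r/2) ≤ 1 := Real.rpow_le_one hv h (by linarith)
      linarith
    · have h2 : v ^ (r/2) ≤ v ^ (1:ℝ) := by
        apply Real.rpow_le_rpow_of_exponent_le h.le (by linarith)
      rw [Real.rpow_one] at h2
      linarith
  have hexp1 : Real.exp (-(σ * v / 2)) ≤ 1 := by
    rw [Real.exp_le_one_iff]
    have : 0 ≤ σ * v := mul_nonneg hσ.le hv
    linarith
  have h2 : v * Real.exp (-(σ * v / 2)) ≤ 2/σ := by
    rw [hEneg, mul_inv_le_iff₀ hE]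
    have hb := Real.add_one_le_exp (σ * v / 2)
    calc v = 2/σ * (σ * v / 2) := by field_simp
      _ ≤ 2/σ * Real.exp (σ * v / 2) := by
          apply mul_le_mul_of_nonneg_left _ (by positivity)
          linarith
  have hEpos : (0:ℝ) ≤ Real.exp (-(σ * v / 2)) := (Real.exp_pos _).le
  calc v ^ (r/2) * Real.exp (-(σ * v / 2)) ≤ (1 + v) * Real.exp (-(σ * v / 2)) :=
        mul_le_mul_of_nonneg_right h1 hEpos
    _ = Real.exp (-(σ * v / 2)) + v * Real.exp (-(σ * v / 2)) := by ring
    _ ≤ 1 + 2/σ := add_le_add hexp1 h2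

theorem stmt_14 (n m : ℕ) (hm : m ≤ n) (σ μ : ℝ) (hσ : 0 < σ) (hμ : μ ≠ 0) :
    ∃ C > 0, ∀ (x' y' : EuclideanSpace ℝ (Fin m))
      (x'' y'' : EuclideanSpace ℝ (Fin (n - m))) (t s : ℝ),
      s < t → x' ≠ 0 → y' ≠ 0 →
      |‖x'‖ ^ μ / ‖y'‖ ^ μ - 1| * (t - s) ^ (-((n : ℝ) + 2) / 2) *
          Real.exp (-σ * (‖x' - y'‖ ^ 2 + ‖x'' - y''‖ ^ 2) / (t - s)) ≤
        C * ‖x'‖ ^ (-(min |μ| 1)) * Phi μ (‖x'‖ / ‖y'‖) *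
          (t - s) ^ (-((n : ℝ) + 2 - min |μ| 1) / 2) *
          Real.exp (-σ * (‖x' - y'‖ ^ 2 + ‖x'' - y''‖ ^ 2) / (2 * (t - s))) := by
  have hK1 : (1:ℝ) ≤ max |μ| 1 := le_max_right _ _
  have hC0 : (0:ℝ) < max |μ| 1 * (1 + 2/σ) := by positivity
  refine ⟨max |μ| 1 * (1 + 2/σ), hC0, ?_⟩
  intro x' y' x'' y'' t s hst hx hy
  set K := max |μ| 1 with hKdef
  set r := min |μ| 1 with hrdef
  have hr0 : 0 < r := lt_min (abs_pos.2 hμ) one_pos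
  have hr1 : r ≤ 1 := min_le_right _ _
  set a := ‖x'‖ with hadef
  set b := ‖y'‖ with hbdef
  have ha : 0 < a := norm_pos_iff.2 hx
  have hb : 0 < b := norm_pos_iff.2 hy
  set τ := t - s with hτdef
  have hτ : 0 < τ := sub_pos.2 hst
  set d := ‖x' - y'‖ ^ 2 + ‖x'' - y''‖ ^ 2 with hddef
  have hd : 0 ≤ d := by positivity
  have htq : 0 < a / b := div_pos ha hb
  have hPhi : 0 < Phi μ (a / b) := Phi_pos htq
  -- Step A: pointwise bound
  have hA : |a ^ μ / b ^ μ - 1| ≤ K * (a ^ (-r) * Phi μ (a/b) * |a - b| ^ r) := by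
    have hab : a ^ μ / b ^ μ = (a/b) ^ μ := (Real.div_rpow ha.le hb.le μ).symm
    rw [hab]
    refine le_trans (key_ineq μ hμ htq) (le_of_eq ?_)
    congr 1
    have e0 : (a/b) ^ (-r) = a ^ (-r) * b ^ r := by
      rw [Real.div_rpow ha.le hb.le, Real.rpow_neg hb.le, div_eq_mul_inv, inv_inv]
    have e1 : |a/b - 1| = |a - b| / b := by
      rw [show a/b - 1 = (a - b)/b by field_simp, abs_div, abs_of_pos hb]
    have hbr : (0:ℝ) < b ^ r := Real.rpow_pos_of_pos hb r
    rw [e0, e1, Real.div_rpow (abs_nonneg _) hb.le]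
    field_simp
    ring
  -- Step B: |a - b| ^ r ≤ d ^ (r/2)
  have hB : |a - b| ^ r ≤ d ^ (r/2) := by
    have h1 : |a - b| ≤ ‖x' - y'‖ := abs_norm_sub_norm_le x' y'
    have h2 : |a - b| ^ r ≤ ‖x' - y'‖ ^ r :=
      Real.rpow_le_rpow (abs_nonneg _) h1 hr0.le
    have h3 : ‖x' - y'‖ ^ r = ((‖x' - y'‖ ^ 2 : ℝ)) ^ (r/2) := by
      rw [← Real.rpow_natCast ‖x' - y'‖ 2, ← Real.rpow_mul (norm_nonneg _)]
      congr 1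
      push_cast
      ring
    have h4 : ((‖x' - y'‖ ^ 2 : ℝ)) ^ (r/2) ≤ d ^ (r/2) := by
      apply Real.rpow_le_rpow (by positivity) _ (by positivity)
      rw [hddef]
      have : (0:ℝ) ≤ ‖x'' - y''‖ ^ 2 := by positivity
      linarith
    calc |a - b| ^ r ≤ ‖x' - y'‖ ^ r := h2
      _ = ((‖x' - y'‖ ^ 2 : ℝ)) ^ (r/2) := h3
      _ ≤ d ^ (r/2) := h4
  -- Step C: combine
  have hX : -σ * d / (2 * τ) = -(σ * (d/τ) / 2) := by
    field_simp
  have hEsplit : Real.exp (-σ * d / τ)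
      = Real.exp (-(σ * (d/τ) / 2)) * Real.exp (-(σ * (d/τ) / 2)) := by
    rw [← Real.exp_add]
    rw [show -(σ * (d/τ) / 2) + -(σ * (d/τ) / 2) = -(σ * (d/τ)) by ring]
    congr 1
    field_simp
  have hTsplit : τ ^ (-((n:ℝ) + 2) / 2) = τ ^ (-((n:ℝ) + 2 - r) / 2) * τ ^ (-(r/2)) := by
    rw [← Real.rpow_add hτ]
    congr 1
    ring
  have hdv : d ^ (r/2) * τ ^ (-(r/2)) = (d/τ) ^ (r/2) := by
    rw [Real.div_rpow hd hτ.le, Real.rpow_neg hτ.le]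
    exact (div_eq_mul_inv _ _).symm
  have hexp := my_exp_bound hσ hr0.le hr1 (div_nonneg hd hτ.le)
  have hT2 : (0:ℝ) < τ ^ (-((n:ℝ) + 2 - r) / 2) := Real.rpow_pos_of_pos hτ _
  have hT1 : (0:ℝ) < τ ^ (-((n:ℝ) + 2) / 2) := Real.rpow_pos_of_pos hτ _
  have hEp : (0:ℝ) < Real.exp (-σ * d / τ) := Real.exp_pos _
  have hEp2 : (0:ℝ) < Real.exp (-(σ * (d/τ) / 2)) := Real.exp_pos _
  have hanr : (0:ℝ) < a ^ (-r) := Real.rpow_pos_of_pos ha _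
  calc |a ^ μ / b ^ μ - 1| * τ ^ (-((n:ℝ) + 2) / 2) * Real.exp (-σ * d / τ)
      ≤ (K * (a ^ (-r) * Phi μ (a/b) * |a - b| ^ r)) * τ ^ (-((n:ℝ) + 2) / 2) *
          Real.exp (-σ * d / τ) := by
        apply mul_le_mul_of_nonneg_right _ hEp.le
        exact mul_le_mul_of_nonneg_right hA hT1.le
    _ ≤ (K * (a ^ (-r) * Phi μ (a/b) * d ^ (r/2))) * τ ^ (-((n:ℝ) + 2) / 2) *
          Real.exp (-σ * d / τ) := by
        apply mul_le_mul_of_nonneg_right _ hEp.le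
        apply mul_le_mul_of_nonneg_right _ hT1.le
        apply mul_le_mul_of_nonneg_left _ (by positivity)
        exact mul_le_mul_of_nonneg_left hB (by positivity)
    _ = (K * (a ^ (-r) * Phi μ (a/b))) * ((d/τ) ^ (r/2) * Real.exp (-(σ * (d/τ) / 2))) *
          (τ ^ (-((n:ℝ) + 2 - r) / 2) * Real.exp (-(σ * (d/τ) / 2))) := by
        rw [hTsplit, hEsplit, ← hdv]
        ring
    _ ≤ (K * (a ^ (-r) * Phi μ (a/b))) * (1 + 2/σ) *
          (τ ^ (-((n:ℝ) + 2 - r) / 2) * Real.exp (-(σ * (d/τ) / 2))) := by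
        apply mul_le_mul_of_nonneg_right _ (by positivity)
        exact mul_le_mul_of_nonneg_left hexp (by positivity)
    _ = K * (1 + 2/σ) * a ^ (-r) * Phi μ (a/b) * τ ^ (-((n:ℝ) + 2 - r) / 2) *
          Real.exp (-σ * d / (2 * τ)) := by
        rw [hX]
        ring
end
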